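/- Let n ≥ 1 and let ζ = exp(2πi/n) ∈ ℂ. For t, s ∈ ℂ with |t| = |s| = 1 and every m ≥ 1, the m-th derivatives of f_t and f_s are equal as polynomials: derivative^[m] f_t = derivative^[m] f_s. That is, the derivative (and all higher derivatives) of f_t do not change when the regular n-gon is rotated about its center. -/

import Mathlib

open Polynomial Finset

private lemma aux_prod_one (n : ℕ) (hn : 0 < n) (ζ : ℂ) (hζ : IsPrimitiveRoot ζ n) (v : ℂ) :
    ∏ k ∈ Finset.range n, (v - ζ ^ k) = v ^ n - 1 := by
  have himg : (Finset.range n).image (ζ ^ ·) = Polynomial.nthRootsFinset n (1 : ℂ) := by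
    apply Finset.eq_of_subset_of_card_le
    · intro x hx
      simp only [Finset.mem_image, Finset.mem_range] at hx
      obtain ⟨k, hk, rfl⟩ := hx
      exact (Polynomial.mem_nthRootsFinset hn 1).2 (by
        rw [← pow_mul, mul_comm, pow_mul, hζ.pow_eq_one, one_pow])
    · rw [hζ.card_nthRootsFinset, Finset.card_image_of_injOn
        (fun i hi j hj => hζ.pow_inj (Finset.mem_range.mp hi) (Finset.mem_range.mp hj))]
      simp
  have h2 := congrArg (Polynomial.eval v) (Polynomial.X_pow_sub_one_eq_prod hn hζ)
  simp only [eval_prod, eval_sub, eval_pow, eval_X, eval_one, eval_C] at h2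
  rw [h2, ← himg, Finset.prod_image
    (fun i hi j hj => hζ.pow_inj (Finset.mem_range.mp hi) (Finset.mem_range.mp hj))]

private lemma aux_prod (n : ℕ) (hn : 0 < n) (ζ : ℂ) (hζ : IsPrimitiveRoot ζ n)
    (u w : ℂ) (hu : u ≠ 0) :
    ∏ k ∈ Finset.range n, (w - u * ζ ^ k) = w ^ n - u ^ n := by
  have h1 : ∏ k ∈ Finset.range n, (w - u * ζ ^ k)
      = ∏ k ∈ Finset.range n, (u * (w / u - ζ ^ k)) := by
    refine Finset.prod_congr rfl fun k _ => ?_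
    field_simp
  rw [h1, Finset.prod_mul_distrib, Finset.prod_const, Finset.card_range,
    aux_prod_one n hn ζ hζ (w / u), mul_sub, mul_one, div_pow,
    mul_div_cancel₀ _ (pow_ne_zero n hu)]

theorem derivative_rotation_invariant (n : ℕ) (hn : 1 ≤ n)
    (ζ : ℂ) (hζ : ζ = Complex.exp (2 * Real.pi * Complex.I / n))
    (t s : ℂ) (ht : ‖t‖ = 1) (hs : ‖s‖ = 1)
    (m : ℕ) (hm : 1 ≤ m) :
    (derivative^[m] (∏ k ∈ Finset.range n, (X - C (Complex.re (t * ζ ^ k))))) =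
      (derivative^[m] (∏ k ∈ Finset.range n, (X - C (Complex.re (s * ζ ^ k))))) := by
  have hn0 : 0 < n := hn
  have hprim : IsPrimitiveRoot ζ n := by
    rw [hζ]; exact Complex.isPrimitiveRoot_exp n hn0.ne'
  have ht0 : t ≠ 0 := fun h => by simp [h] at ht
  have hs0 : s ≠ 0 := fun h => by simp [h] at hs
  have hζabs : ‖ζ‖ = 1 := by
    rw [hζ]
    rw [Complex.norm_exp]
    norm_num [Complex.div_re, Complex.mul_re, Complex.mul_im]
  set conj := starRingEnd ℂ
  -- the complex-coefficient version of f_t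
  set F : ℂ → ℂ[X] := fun u => ∏ k ∈ Finset.range n,
    ((X : ℂ[X]) - C ((Complex.re (u * ζ ^ k) : ℂ))) with hF
  -- key product lemma applied to conjugates
  have hconjprod : ∀ (u w : ℂ), u ≠ 0 →
      ∏ k ∈ Finset.range n, (w - conj (u * ζ ^ k)) = w ^ n - (conj u) ^ n := by
    intro u w hu
    have := congrArg conj (aux_prod n hn0 ζ hprim u (conj w) hu)
    simpa [map_prod, map_pow] using this
  -- evaluation formula
  have heval : ∀ (u : ℂ), ‖u‖ = 1 → u ≠ 0 → ∀ (x w : ℂ), w ≠ 0 →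
      w ^ 2 - 2 * x * w + 1 = 0 →
      (2 * w) ^ n * Polynomial.eval x (F u) = (w ^ n - u ^ n) * (w ^ n - (conj u) ^ n) := by
    intro u hu hu0 x w hw0 hw
    have hev : Polynomial.eval x (F u)
        = ∏ k ∈ Finset.range n, (x - (Complex.re (u * ζ ^ k) : ℂ)) := by
      simp [hF, eval_prod]
    have hdist : ∏ k ∈ Finset.range n, (2 * w * (x - (Complex.re (u * ζ ^ k) : ℂ)))
        = (2 * w) ^ n * ∏ k ∈ Finset.range n, (x - (Complex.re (u * ζ ^ k) : ℂ)) := by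
      rw [Finset.prod_mul_distrib, Finset.prod_const, Finset.card_range]
    rw [hev, ← hdist]
    have hfac : ∀ k ∈ Finset.range n,
        2 * w * (x - (Complex.re (u * ζ ^ k) : ℂ))
          = (w - u * ζ ^ k) * (w - conj (u * ζ ^ k)) := by
      intro k _
      have habs : (u * ζ ^ k) * conj (u * ζ ^ k) = 1 := by
        have h1 : ‖u * ζ ^ k‖ = 1 := by
          simp [norm_mul, norm_pow, hu, hζabs]
        rw [Complex.mul_conj, Complex.normSq_eq_norm_sq, h1]
        norm_num
      have hre : (u * ζ ^ k) + conj (u * ζ ^ k) = 2 * (Complex.re (u * ζ ^ k) : ℂ) := by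
        rw [Complex.add_conj]; push_cast; ring
      linear_combination w * hre - habs - hw
    rw [Finset.prod_congr rfl hfac, Finset.prod_mul_distrib,
      aux_prod n hn0 ζ hprim u w hu0, hconjprod u w hu0]
  -- the difference of evaluations is the constant c
  set c : ℂ := ((s ^ n + conj s ^ n) - (t ^ n + conj t ^ n)) / 2 ^ n with hc
  have hdiff : ∀ x : ℂ, Polynomial.eval x (F t) = Polynomial.eval x (F s) + c := by
    intro x
    obtain ⟨w, hw⟩ : ∃ w : ℂ, w ^ 2 - 2 * x * w + 1 = 0 := by
      have hdeg : (X ^ 2 - C (2 * x) * X + C 1 : ℂ[X]).degree = 2 := by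
        compute_degree!
      obtain ⟨z, hz⟩ := Complex.exists_root (by rw [hdeg]; norm_num)
      refine ⟨z, ?_⟩
      have := hz
      simp only [Polynomial.IsRoot, eval_add, eval_sub, eval_pow, eval_mul, eval_X,
        eval_C] at this
      linear_combination this
    have hw0 : w ≠ 0 := by rintro rfl; simp at hw
    have h1 := heval t ht ht0 x w hw0 hw
    have h2 := heval s hs hs0 x w hw0 hw
    have htt : t ^ n * conj t ^ n = 1 := by
      rw [← mul_pow, Complex.mul_conj, Complex.normSq_eq_norm_sq, ht]; norm_num
    have hss : s ^ n * conj s ^ n = 1 := by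
      rw [← mul_pow, Complex.mul_conj, Complex.normSq_eq_norm_sq, hs]; norm_num
    have hcc : c * 2 ^ n = (s ^ n + conj s ^ n) - (t ^ n + conj t ^ n) := by
      rw [hc]; field_simp
    have h2n : (2 * w) ^ n ≠ 0 := pow_ne_zero _ (by simp [hw0])
    have key : (2 * w) ^ n * (Polynomial.eval x (F t) - Polynomial.eval x (F s) - c) = 0 := by
      linear_combination h1 - h2 - w ^ n * hcc + htt - hss
    have := (mul_eq_zero.mp key).resolve_left h2n
    linear_combination this
  have hFeq : F t = F s + C c := by
    apply Polynomial.funext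
    intro x
    rw [hdiff x]
    simp
  -- back to ℝ[X]
  set r : ℝ := (2 * (s ^ n).re - 2 * (t ^ n).re) / 2 ^ n with hr
  have hcr : (r : ℂ) = c := by
    have h1 : conj s ^ n = conj (s ^ n) := (map_pow conj s n).symm
    have h2 : conj t ^ n = conj (t ^ n) := (map_pow conj t n).symm
    rw [hc, h1, h2, Complex.add_conj, Complex.add_conj, hr]
    push_cast
    ring
  have hmap : ∀ u : ℂ, Polynomial.map (algebraMap ℝ ℂ)
      (∏ k ∈ Finset.range n, (X - C (Complex.re (u * ζ ^ k)))) = F u := by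
    intro u
    rw [Polynomial.map_prod]
    simp [hF]
  have hinj : Function.Injective (algebraMap ℝ ℂ) := fun a b h => by
    simpa using h
  have f_eq : (∏ k ∈ Finset.range n, (X - C (Complex.re (t * ζ ^ k))))
      = (∏ k ∈ Finset.range n, (X - C (Complex.re (s * ζ ^ k)))) + C r := by
    apply Polynomial.map_injective (algebraMap ℝ ℂ) hinj
    rw [Polynomial.map_add, Polynomial.map_C, hmap t, hmap s, hFeq]
    congr 1
    rw [← hcr]
    simp
  obtain ⟨m', rfl⟩ : ∃ m', m = m' + 1 := ⟨m - 1, (Nat.succ_pred_eq_of_pos hm).symm⟩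
  rw [Function.iterate_succ_apply, Function.iterate_succ_apply, f_eq,
    derivative_add, derivative_C, add_zero]
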